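/- Let X̄, X̂ ∈ R^{n×p} (n ≥ p) and X(t) = X̄ + t(X̂ − X̄) for t ∈ [0,1]. Then ‖X(t)‖_* = ‖X̄‖_* for all t ∈ [0,1] if and only if ‖X̄‖_* = ‖X̂‖_* and there exists U ∈ R^{n×p} with UᵀU = I_p such that both X̄Uᵀ and X̂Uᵀ are symmetric positive semidefinite. -/

import Mathlib

open Matrix

/-- The square root of a positive semidefinite matrix, as defined in the older Mathlib
(removed since). -/
noncomputable def Matrix.PosSemidef.sqrt {n : Type*} [Fintype n] [DecidableEq n]
    {A : Matrix n n ℝ} (hA : A.PosSemidef) : Matrix n n ℝ :=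
  hA.1.eigenvectorUnitary.1 * diagonal ((√·) ∘ hA.1.eigenvalues) *
  (star hA.1.eigenvectorUnitary : Matrix n n ℝ)

noncomputable def nuclearNorm {m n : Type*} [Fintype m] [Fintype n] [DecidableEq n]
    (A : Matrix m n ℝ) : ℝ :=
  (Matrix.posSemidef_conjTranspose_mul_self A).sqrt.trace

noncomputable def opNorm {m n : Type*} [Fintype m] [Fintype n] [DecidableEq m] [DecidableEq n]
    (A : Matrix m n ℝ) : ℝ :=
  ‖(LinearMap.toContinuousLinearMap
      (Matrix.toEuclideanLin A : EuclideanSpace ℝ n →ₗ[ℝ] EuclideanSpace ℝ m))‖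

def finner {m n : Type*} [Fintype m] [Fintype n] (A B : Matrix m n ℝ) : ℝ :=
  (Aᵀ * B).trace

noncomputable def nuclearSubdiff {m n : Type*} [Fintype m] [Fintype n] [DecidableEq n]
    (X : Matrix m n ℝ) : Set (Matrix m n ℝ) :=
  {Y | ∀ Z, nuclearNorm X + finner Y (Z - X) ≤ nuclearNorm Z}

def rectDiag (n p : ℕ) (s : Fin p → ℝ) : Matrix (Fin n) (Fin p) ℝ :=
  Matrix.of fun i j => if (i : ℕ) = (j : ℕ) then s j else 0

def blockIR (n p r : ℕ) (R : Matrix (Fin (n - r)) (Fin (p - r)) ℝ) :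
    Matrix (Fin n) (Fin p) ℝ :=
  Matrix.of fun i j =>
    if h : (i : ℕ) < r ∨ (j : ℕ) < r then (if (i : ℕ) = (j : ℕ) then 1 else 0)
    else R ⟨i - r, by have := i.isLt; omega⟩ ⟨j - r, by have := j.isLt; omega⟩

open scoped MatrixOrder in
lemma Matrix.PosSemidef.sqrt_eq_cfc' {N : Type*} [Fintype N] [DecidableEq N]
    {A : Matrix N N ℝ} (hA : A.PosSemidef) : hA.sqrt = CFC.sqrt A := by
  rw [CFC.sqrt_eq_cfc, cfc_nnreal_eq_real _ A hA.nonneg, hA.1.cfc_eq, Matrix.IsHermitian.cfc,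
    Unitary.conjStarAlgAut_apply, Matrix.PosSemidef.sqrt]
  congr 3
  funext i
  simp [Real.coe_sqrt, Real.coe_toNNReal', hA.eigenvalues_nonneg i]

open scoped MatrixOrder in
lemma Matrix.PosSemidef.posSemidef_sqrt {N : Type*} [Fintype N] [DecidableEq N]
    {A : Matrix N N ℝ} (hA : A.PosSemidef) : hA.sqrt.PosSemidef := by
  rw [hA.sqrt_eq_cfc']
  exact (CFC.sqrt_nonneg A).posSemidef

open scoped MatrixOrder in
lemma Matrix.PosSemidef.sqrt_mul_self {N : Type*} [Fintype N] [DecidableEq N]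
    {A : Matrix N N ℝ} (hA : A.PosSemidef) : hA.sqrt * hA.sqrt = A := by
  rw [hA.sqrt_eq_cfc']
  exact CFC.sqrt_mul_sqrt_self A hA.nonneg

open scoped MatrixOrder in
lemma Matrix.PosSemidef.eq_sqrt_of_sq_eq {N : Type*} [Fintype N] [DecidableEq N]
    {A : Matrix N N ℝ} (hA : A.PosSemidef) {B : Matrix N N ℝ} (hB : B.PosSemidef)
    (hAB : A ^ 2 = B) : A = hB.sqrt := by
  rw [hB.sqrt_eq_cfc']
  exact (CFC.sqrt_unique (by rw [← pow_two, hAB]) hA.nonneg).symm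

lemma ct_eq_t {m n : Type*} (A : Matrix m n ℝ) : Aᴴ = Aᵀ :=
  Matrix.conjTranspose_eq_transpose_of_trivial A

lemma sqrt_unique {N : Type*} [Fintype N] [DecidableEq N] {A B : Matrix N N ℝ}
    (hA : A.PosSemidef) (hB : B.PosSemidef) (h : B * B = A) : hA.sqrt = B :=
  (hB.eq_sqrt_of_sq_eq hA (by rwa [pow_two])).symm

lemma posSemidef_smul' {N : Type*} [Fintype N] {A : Matrix N N ℝ} (hA : A.PosSemidef)
    {c : ℝ} (hc : 0 ≤ c) : (c • A).PosSemidef := by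
  refine ⟨?_, fun x => ?_⟩
  · have := hA.1
    unfold Matrix.IsHermitian at *
    rw [conjTranspose_smul, this, star_trivial]
  · exact (hA.smul hc).2 x

lemma nuclearNorm_of_posSemidef {N : Type*} [Fintype N] [DecidableEq N]
    {B : Matrix N N ℝ} (hB : B.PosSemidef) : nuclearNorm B = B.trace := by
  unfold nuclearNorm
  rw [sqrt_unique _ hB (by rw [hB.isHermitian.eq])]

lemma nuclearNorm_mul_transpose {n p : ℕ} (X U : Matrix (Fin n) (Fin p) ℝ)
    (hU : Uᵀ * U = 1) : nuclearNorm (X * Uᵀ) = nuclearNorm X := by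
  have hS := (posSemidef_conjTranspose_mul_self X).posSemidef_sqrt
  set S := (posSemidef_conjTranspose_mul_self X).sqrt with hSdef
  have hsq : S * S = Xᴴ * X := (posSemidef_conjTranspose_mul_self X).sqrt_mul_self
  rw [ct_eq_t] at hsq
  have hPSD : (U * S * Uᵀ).PosSemidef := by
    have := hS.mul_mul_conjTranspose_same U
    rwa [ct_eq_t] at this
  have key : (U * S * Uᵀ) * (U * S * Uᵀ) = (X * Uᵀ)ᴴ * (X * Uᵀ) := by
    rw [ct_eq_t, transpose_mul, transpose_transpose]
    simp only [Matrix.mul_assoc]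
    rw [← Matrix.mul_assoc Uᵀ U (S * Uᵀ), hU, Matrix.one_mul,
        ← Matrix.mul_assoc Xᵀ X Uᵀ, ← hsq, Matrix.mul_assoc]
  unfold nuclearNorm
  rw [sqrt_unique _ hPSD key]
  rw [Matrix.trace_mul_comm (U * S) Uᵀ, ← Matrix.mul_assoc, hU, Matrix.one_mul]

open RealInnerProductSpace in
lemma trace_le_nuclearNorm_aux {N : ℕ} (B : Matrix (Fin N) (Fin N) ℝ) :
    B.trace ≤ nuclearNorm B ∧ (B.trace = nuclearNorm B → B.PosSemidef) := by
  classical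
  have hA := posSemidef_conjTranspose_mul_self B
  set S := hA.sqrt with hSdef
  have hS : S.PosSemidef := hA.posSemidef_sqrt
  have hH : S.IsHermitian := hS.1
  set μ : Fin N → ℝ := hH.eigenvalues with hμdef
  have hμ0 : ∀ i, 0 ≤ μ i := hS.eigenvalues_nonneg
  set v : Fin N → EuclideanSpace ℝ (Fin N) := fun i => hH.eigenvectorBasis i with hvdef
  set Vm : Matrix (Fin N) (Fin N) ℝ := (hH.eigenvectorUnitary : Matrix (Fin N) (Fin N) ℝ)
    with hVmdef
  have hV1 : star Vm * Vm = 1 := Matrix.mem_unitaryGroup_iff'.mp hH.eigenvectorUnitary.2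
  have hV2 : Vm * star Vm = 1 := Matrix.mem_unitaryGroup_iff.mp hH.eigenvectorUnitary.2
  have heig : ∀ j, S *ᵥ ⇑(v j) = μ j • ⇑(v j) := fun j => hH.mulVec_eigenvectorBasis j
  -- trace of B as sum over eigenbasis
  have hdiag : ∀ j, (star Vm * B * Vm) j j = ⇑(v j) ⬝ᵥ (B *ᵥ ⇑(v j)) := by
    intro j
    simp only [Matrix.mul_apply, Matrix.mulVec, dotProduct, Matrix.star_apply,
      star_trivial, Finset.sum_mul, Finset.mul_sum]
    rw [Finset.sum_comm]
    refine Finset.sum_congr rfl fun a _ => Finset.sum_congr rfl fun c _ => ?_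
    have : Vm a j = ⇑(v j) a := by
      simp [hVmdef, hvdef]
    rw [this]
    have : Vm c j = ⇑(v j) c := by
      simp [hVmdef, hvdef]
    rw [this]
    ring
  have htraceB : B.trace = ∑ j, ⇑(v j) ⬝ᵥ (B *ᵥ ⇑(v j)) := by
    have h1 : B.trace = (star Vm * B * Vm).trace := by
      rw [Matrix.trace_mul_comm (star Vm * B) Vm, ← Matrix.mul_assoc, hV2, Matrix.one_mul]
    rw [h1]
    unfold Matrix.trace
    simp only [Matrix.diag_apply]
    exact Finset.sum_congr rfl fun j _ => hdiag j
  -- norm of B *ᵥ v j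
  have hvv : ∀ j, ⇑(v j) ⬝ᵥ ⇑(v j) = 1 := by
    intro j
    have h := hH.eigenvectorBasis.orthonormal.1 j
    have h2 : ⟪v j, v j⟫ = (1 : ℝ) := by
      rw [real_inner_self_eq_norm_sq]
      show ‖hH.eigenvectorBasis j‖ ^ 2 = 1
      rw [h]; norm_num
    rw [EuclideanSpace.inner_eq_star_dotProduct] at h2
    simpa using h2
  have hBv : ∀ j, (B *ᵥ ⇑(v j)) ⬝ᵥ (B *ᵥ ⇑(v j)) = μ j ^ 2 := by
    intro j
    rw [Matrix.dotProduct_mulVec, ← Matrix.mulVec_transpose, Matrix.mulVec_mulVec]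
    have hBtB : Bᵀ * B = S * S := by
      rw [← ct_eq_t]; exact hA.sqrt_mul_self.symm
    rw [hBtB, ← Matrix.mulVec_mulVec, heig, Matrix.mulVec_smul, heig, smul_dotProduct,
      smul_dotProduct, smul_eq_mul, smul_eq_mul, hvv]
    ring
  -- nuclear norm of B as sum of eigenvalues of S
  have hnn : nuclearNorm B = ∑ j, μ j := by
    show S.trace = ∑ j, μ j
    conv_lhs => rw [hH.spectral_theorem, Unitary.conjStarAlgAut_apply]
    rw [Matrix.trace_mul_comm, ← Matrix.mul_assoc, hV1, Matrix.one_mul, Matrix.trace_diagonal]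
    simp [RCLike.ofReal_real_eq_id]
    rfl
  -- Euclidean vectors for images
  set y : Fin N → EuclideanSpace ℝ (Fin N) :=
    fun j => (WithLp.equiv 2 (Fin N → ℝ)).symm (B *ᵥ ⇑(v j)) with hydef
  have hyinner : ∀ j, ⟪v j, y j⟫ = ⇑(v j) ⬝ᵥ (B *ᵥ ⇑(v j)) := by
    intro j
    rw [EuclideanSpace.inner_eq_star_dotProduct]
    simp [hydef]
    exact dotProduct_comm _ _
  have hynorm : ∀ j, ‖y j‖ = μ j := by
    intro j
    have h1 : ‖y j‖ ^ 2 = μ j ^ 2 := by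
      rw [← real_inner_self_eq_norm_sq, EuclideanSpace.inner_eq_star_dotProduct]
      simpa [hydef] using hBv j
    nlinarith [norm_nonneg (y j), hμ0 j]
  have hvnorm : ∀ j, ‖v j‖ = 1 := fun j => hH.eigenvectorBasis.orthonormal.1 j
  have hle : ∀ j, ⇑(v j) ⬝ᵥ (B *ᵥ ⇑(v j)) ≤ μ j := by
    intro j
    rw [← hyinner j]
    calc ⟪v j, y j⟫ ≤ ‖v j‖ * ‖y j‖ := real_inner_le_norm _ _
      _ = μ j := by rw [hvnorm, hynorm, one_mul]
  constructor
  · rw [htraceB, hnn]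
    exact Finset.sum_le_sum fun j _ => hle j
  · intro heq
    rw [htraceB, hnn] at heq
    have hall : ∀ j, ⇑(v j) ⬝ᵥ (B *ᵥ ⇑(v j)) = μ j := by
      have := (Finset.sum_eq_sum_iff_of_le (fun j _ => hle j)).mp heq
      exact fun j => this j (Finset.mem_univ j)
    have hBS : B = S := by
      have hmv : ∀ j, B *ᵥ ⇑(v j) = S *ᵥ ⇑(v j) := by
        intro j
        have h1 : ⟪v j, y j⟫ = ‖v j‖ * ‖y j‖ := by
          rw [hyinner j, hall j, hvnorm, hynorm, one_mul]
        have h2 := inner_eq_norm_mul_iff_real.mp h1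
        rw [hvnorm, hynorm, one_smul] at h2
        have h3 : y j = μ j • v j := h2.symm
        have h4 := congrArg (WithLp.equiv 2 (Fin N → ℝ)) h3
        simp only [hydef, Equiv.apply_symm_apply] at h4
        rw [h4, heig j]
        rfl
      have hlin : Matrix.toEuclideanLin B = Matrix.toEuclideanLin S := by
        apply Module.Basis.ext hH.eigenvectorBasis.toBasis
        intro j
        rw [OrthonormalBasis.coe_toBasis]
        rw [Matrix.toEuclideanLin_apply, Matrix.toEuclideanLin_apply]
        exact congrArg _ (hmv j)
      exact Matrix.toEuclideanLin.injective hlin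
    rw [hBS]
    exact hS

open RealInnerProductSpace in
lemma exists_dual_isometry {n p : ℕ} (hpn : p ≤ n) (M : Matrix (Fin n) (Fin p) ℝ) :
    ∃ U : Matrix (Fin n) (Fin p) ℝ, Uᵀ * U = 1 ∧ (M * Uᵀ).PosSemidef ∧
      (M * Uᵀ).trace = nuclearNorm M := by
  classical
  have hA := posSemidef_conjTranspose_mul_self M
  have hH : (Mᴴ * M).IsHermitian := hA.1
  set μ : Fin p → ℝ := hH.eigenvalues with hμdef
  have hμ0 : ∀ i, 0 ≤ μ i := hA.eigenvalues_nonneg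
  set Vm : Matrix (Fin p) (Fin p) ℝ := (hH.eigenvectorUnitary : Matrix (Fin p) (Fin p) ℝ)
    with hVmdef
  have hV1 : star Vm * Vm = 1 := Matrix.mem_unitaryGroup_iff'.mp hH.eigenvectorUnitary.2
  have hV2 : Vm * star Vm = 1 := Matrix.mem_unitaryGroup_iff.mp hH.eigenvectorUnitary.2
  set C : Matrix (Fin n) (Fin p) ℝ := M * Vm with hCdef
  have hCC : Cᴴ * C = Matrix.diagonal μ := by
    rw [hCdef, conjTranspose_mul, ← Matrix.mul_assoc, Matrix.mul_assoc Vmᴴ Mᴴ M]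
    have := hH.conjStarAlgAut_star_eigenvectorUnitary
    rw [Unitary.conjStarAlgAut_star_apply] at this
    rw [show star Vm = Vmᴴ from rfl] at this
    rw [this]
    simp [RCLike.ofReal_real_eq_id]
    exact fun _ => rfl
  have hcol : ∀ j k : Fin p, (fun a => C a j) ⬝ᵥ (fun a => C a k) =
      if j = k then μ j else 0 := by
    intro j k
    have := congrFun (congrFun hCC j) k
    simpa [Matrix.mul_apply, Matrix.conjTranspose_apply, dotProduct,
      Matrix.diagonal_apply] using this
  -- normalized columns
  set u : Fin p → EuclideanSpace ℝ (Fin n) :=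
    fun j => (WithLp.equiv 2 (Fin n → ℝ)).symm ((Real.sqrt (μ j))⁻¹ • fun a => C a j)
    with hudef
  set s : Set (Fin n) := {i | ∃ h : (i : ℕ) < p, μ ⟨i, h⟩ ≠ 0} with hsdef
  set v' : Fin n → EuclideanSpace ℝ (Fin n) :=
    fun i => if h : (i : ℕ) < p then u ⟨i, h⟩ else 0 with hv'def
  have hON : Orthonormal ℝ (s.restrict v') := by
    rw [orthonormal_iff_ite]
    rintro ⟨i, hi, hμi⟩ ⟨k, hk, hμk⟩
    simp only [Set.restrict_apply, hv'def, Subtype.mk_eq_mk]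
    simp only [Set.restrict, Set.domRestrict_apply]
    rw [dif_pos hi, dif_pos hk, hudef]
    rw [show ∀ x y : Fin n → ℝ, ⟪(WithLp.equiv 2 (Fin n → ℝ)).symm x,
        (WithLp.equiv 2 (Fin n → ℝ)).symm y⟫ = star x ⬝ᵥ y from fun _ _ => dotProduct_comm _ _]
    rw [show (star ((Real.sqrt (μ ⟨i, hi⟩))⁻¹ • fun a => C a ⟨i, hi⟩) : Fin n → ℝ)
        = (Real.sqrt (μ ⟨i, hi⟩))⁻¹ • fun a => C a ⟨i, hi⟩ from by simp]
    rw [smul_dotProduct, dotProduct_smul, hcol]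
    by_cases hik : (⟨(i : ℕ), hi⟩ : Fin p) = ⟨(k : ℕ), hk⟩
    · have h3 : (i : ℕ) = (k : ℕ) := by simpa using hik
      have hik2 : i = k := Fin.ext h3
      rw [if_pos hik, if_pos hik2, ← hik, smul_eq_mul, smul_eq_mul]
      have h0 : 0 < μ ⟨i, hi⟩ := lt_of_le_of_ne (hμ0 _) (Ne.symm hμi)
      have hs0 : Real.sqrt (μ ⟨i, hi⟩) ≠ 0 := Real.sqrt_ne_zero'.mpr h0
      rw [← Real.mul_self_sqrt (le_of_lt h0)]
      field_simp
      rw [Real.sqrt_sq (Real.sqrt_nonneg _)]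
    · have hik2 : ¬ i = k := by
        intro hcon
        exact hik (by subst hcon; rfl)
      rw [if_neg hik, if_neg hik2]
      simp
  obtain ⟨b, hb⟩ := hON.exists_orthonormalBasis_extension_of_card_eq
    (by simp [finrank_euclideanSpace_fin])
  set w : Fin p → EuclideanSpace ℝ (Fin n) := fun j => b (Fin.castLE hpn j) with hwdef
  have hwON : Orthonormal ℝ w := b.orthonormal.comp _ (Fin.castLE_injective hpn)
  have hkey : ∀ j : Fin p, (fun a => C a j) = fun a => Real.sqrt (μ j) * (w j) a := by
    intro j
    by_cases hμj : μ j = 0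
    · have hc0 : (fun a => C a j) ⬝ᵥ (fun a => C a j) = 0 := by rw [hcol]; simp [hμj]
      have hc0' : (fun a => C a j) = 0 := dotProduct_self_eq_zero.mp hc0
      rw [hc0', hμj]
      funext a
      simp
    · have hjs : (Fin.castLE hpn j : Fin n) ∈ s := by
        refine ⟨by simpa using j.isLt, ?_⟩
        convert hμj using 2
        exact Fin.ext (by simp)
      have hbw : w j = v' (Fin.castLE hpn j) := hb _ hjs
      have hv'j : v' (Fin.castLE hpn j) = u j := by
        have hlt : ((Fin.castLE hpn j : Fin n) : ℕ) < p := by simpa using j.isLt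
        simp only [hv'def]
        rw [dif_pos hlt]
        congr 1
      rw [hbw, hv'j, hudef]
      funext a
      have hsq : Real.sqrt (μ j) ≠ 0 :=
        Real.sqrt_ne_zero'.mpr (lt_of_le_of_ne (hμ0 j) (Ne.symm hμj))
      show C a j = Real.sqrt (μ j) * ((Real.sqrt (μ j))⁻¹ • fun a => C a j) a
      simp only [Pi.smul_apply, smul_eq_mul]
      field_simp
  -- matrix of the w family
  set W : Matrix (Fin n) (Fin p) ℝ := Matrix.of (fun a j => (w j) a) with hWdef
  have hstar : star Vm = Vmᵀ := by rw [Matrix.star_eq_conjTranspose, ct_eq_t]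
  have hWW : Wᵀ * W = 1 := by
    ext j k
    have hinner := orthonormal_iff_ite.mp hwON j k
    rw [EuclideanSpace.inner_eq_star_dotProduct] at hinner
    simp only [Matrix.mul_apply, Matrix.transpose_apply, Matrix.one_apply, hWdef,
      Matrix.of_apply]
    simpa [dotProduct, mul_comm] using hinner
  set D : Matrix (Fin p) (Fin p) ℝ := Matrix.diagonal (fun j => Real.sqrt (μ j)) with hDdef
  have hD : M * Vm = W * D := by
    ext a j
    rw [hDdef, Matrix.mul_diagonal]
    have h1 := congrFun (hkey j) a
    rw [show C a j = (M * Vm) a j from rfl] at h1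
    rw [h1, hWdef]
    simp [mul_comm]
  have hM : M = W * D * star Vm := by
    rw [← hD, Matrix.mul_assoc, hV2, Matrix.mul_one]
  have hDpsd : D.PosSemidef := Matrix.PosSemidef.diagonal (fun j => Real.sqrt_nonneg _)
  have hUt : (W * Vmᵀ)ᵀ = Vm * Wᵀ := by
    rw [Matrix.transpose_mul, Matrix.transpose_transpose]
  have hMU : M * (W * Vmᵀ)ᵀ = W * D * Wᵀ := by
    rw [hUt]
    conv_lhs => rw [hM]
    rw [Matrix.mul_assoc (W * D) (star Vm) (Vm * Wᵀ), ← Matrix.mul_assoc (star Vm) Vm Wᵀ,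
      hV1, Matrix.one_mul]
  refine ⟨W * Vmᵀ, ?_, ?_, ?_⟩
  · rw [hUt, Matrix.mul_assoc, ← Matrix.mul_assoc Wᵀ W Vmᵀ, hWW, Matrix.one_mul, ← hstar, hV2]
  · rw [hMU]
    have := hDpsd.mul_mul_conjTranspose_same W
    rwa [ct_eq_t] at this
  · rw [hMU]
    have htr1 : (W * D * Wᵀ).trace = D.trace := by
      rw [Matrix.trace_mul_comm (W * D) Wᵀ, ← Matrix.mul_assoc, hWW, Matrix.one_mul]
    rw [htr1]
    show D.trace = hA.sqrt.trace
    rw [Matrix.PosSemidef.sqrt]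
    rw [Matrix.trace_mul_comm, ← Matrix.mul_assoc]
    have hV1' : (star (hH.eigenvectorUnitary : Matrix (Fin p) (Fin p) ℝ))
        * (hH.eigenvectorUnitary : Matrix (Fin p) (Fin p) ℝ) = 1 := hV1
    rw [hV1', Matrix.one_mul, hDdef, Matrix.trace_diagonal, Matrix.trace_diagonal]
    simp [RCLike.ofReal_real_eq_id]
    rfl

theorem flat_segment_iff_simultaneous_polarization {n p : ℕ} (hpn : p ≤ n)
    (Xb Xh : Matrix (Fin n) (Fin p) ℝ) :
    (∀ t : ℝ, t ∈ Set.Icc (0 : ℝ) 1 →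
        nuclearNorm (Xb + t • (Xh - Xb)) = nuclearNorm Xb) ↔
      (nuclearNorm Xb = nuclearNorm Xh ∧
        ∃ U : Matrix (Fin n) (Fin p) ℝ, Uᵀ * U = 1 ∧
          (Xb * Uᵀ).PosSemidef ∧ (Xh * Uᵀ).PosSemidef) := by
  constructor
  · intro h
    have h1 := h 1 (by norm_num)
    have hnorm : nuclearNorm Xb = nuclearNorm Xh := by
      rw [← h1]; congr 1; rw [one_smul]; abel
    obtain ⟨U, hU, hpsd, htr⟩ := exists_dual_isometry hpn (Xb + (2⁻¹ : ℝ) • (Xh - Xb))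
    have hmid := h 2⁻¹ (by norm_num)
    have hexp : (Xb + (2⁻¹ : ℝ) • (Xh - Xb)) * Uᵀ
        = Xb * Uᵀ + (2⁻¹ : ℝ) • (Xh * Uᵀ - Xb * Uᵀ) := by
      rw [Matrix.add_mul, Matrix.smul_mul, Matrix.sub_mul]
    have htrexp : ((Xb + (2⁻¹ : ℝ) • (Xh - Xb)) * Uᵀ).trace
        = (Xb * Uᵀ).trace + 2⁻¹ * ((Xh * Uᵀ).trace - (Xb * Uᵀ).trace) := by
      rw [hexp, Matrix.trace_add, Matrix.trace_smul, Matrix.trace_sub, smul_eq_mul]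
    have hNb : nuclearNorm (Xb * Uᵀ) = nuclearNorm Xb := nuclearNorm_mul_transpose Xb U hU
    have hNh : nuclearNorm (Xh * Uᵀ) = nuclearNorm Xh := nuclearNorm_mul_transpose Xh U hU
    have hb_le := (trace_le_nuclearNorm_aux (Xb * Uᵀ)).1
    have hh_le := (trace_le_nuclearNorm_aux (Xh * Uᵀ)).1
    rw [hNb] at hb_le
    rw [hNh] at hh_le
    rw [htrexp, hmid] at htr
    refine ⟨hnorm, U, hU, ?_, ?_⟩
    · refine (trace_le_nuclearNorm_aux (Xb * Uᵀ)).2 ?_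
      rw [hNb]
      linarith
    · refine (trace_le_nuclearNorm_aux (Xh * Uᵀ)).2 ?_
      rw [hNh]
      linarith
  · rintro ⟨hnorm, U, hU, hb, hh⟩
    intro t ht
    have hXU : (Xb + t • (Xh - Xb)) * Uᵀ = Xb * Uᵀ + t • (Xh * Uᵀ - Xb * Uᵀ) := by
      rw [Matrix.add_mul, Matrix.smul_mul, Matrix.sub_mul]
    have hsplit : Xb * Uᵀ + t • (Xh * Uᵀ - Xb * Uᵀ)
        = (1 - t) • (Xb * Uᵀ) + t • (Xh * Uᵀ) := by
      rw [sub_smul, one_smul, smul_sub]; abel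
    have hpsd_t : ((Xb + t • (Xh - Xb)) * Uᵀ).PosSemidef := by
      rw [hXU, hsplit]
      exact (posSemidef_smul' hb (by linarith [ht.2])).add (posSemidef_smul' hh ht.1)
    have e1 : (Xb * Uᵀ).trace = nuclearNorm Xb := by
      rw [← nuclearNorm_of_posSemidef hb, nuclearNorm_mul_transpose Xb U hU]
    have e2 : (Xh * Uᵀ).trace = nuclearNorm Xh := by
      rw [← nuclearNorm_of_posSemidef hh, nuclearNorm_mul_transpose Xh U hU]
    calc nuclearNorm (Xb + t • (Xh - Xb))
        = nuclearNorm ((Xb + t • (Xh - Xb)) * Uᵀ) :=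
          (nuclearNorm_mul_transpose _ U hU).symm
      _ = ((Xb + t • (Xh - Xb)) * Uᵀ).trace := nuclearNorm_of_posSemidef hpsd_t
      _ = (Xb * Uᵀ).trace + t * ((Xh * Uᵀ).trace - (Xb * Uᵀ).trace) := by
          rw [hXU, Matrix.trace_add, Matrix.trace_smul, Matrix.trace_sub, smul_eq_mul]
      _ = nuclearNorm Xb := by rw [e1, e2, ← hnorm]; ring
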